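/- In a 3-player Tullock contest with v_1/c_1 ≤ v_2/c_2 ≤ v_3/c_3, if c_2/v_2 + c_3/v_3 ≤ c_1/v_1, then the equilibrium bids are x_1* = 0, x_2* = (c_3/v_3)/((c_2/v_2 + c_3/v_3)^2) and x_3* = (c_2/v_2)/((c_2/v_2 + c_3/v_3)^2), and the equilibrium payoffs are U_1* = 0, U_2* = v_2·(c_3/v_3)/(c_2/v_2 + c_3/v_3) and U_3* = v_3·(c_2/v_2)/(c_2/v_2 + c_3/v_3). -/

import Mathlib

/-- In a 3-player Tullock contest with `v₁/c₁ ≤ v₂/c₂ ≤ v₃/c₃`, if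
`c₂/v₂ + c₃/v₃ ≤ c₁/v₁`, then (with `α > 0` the unique solution of
`∑ i [1 - (cᵢ/vᵢ)α]^+ = 1` and equilibrium bids `xᵢ* = α[1 - (cᵢ/vᵢ)α]^+`,
payoffs `Uᵢ* = [vᵢ - cᵢα]^+`): `x₁* = 0`,
`x₂* = (c₃/v₃)/((c₂/v₂ + c₃/v₃)²)`, `x₃* = (c₂/v₂)/((c₂/v₂ + c₃/v₃)²)`,
`U₁* = 0`, `U₂* = v₂(c₃/v₃)/(c₂/v₂ + c₃/v₃)`,
`U₃* = v₃(c₂/v₂)/(c₂/v₂ + c₃/v₃)`. -/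
theorem tullock3_dropout_case (v₁ v₂ v₃ c₁ c₂ c₃ : ℝ)
    (hv₁ : 0 < v₁) (hv₂ : 0 < v₂) (hv₃ : 0 < v₃)
    (hc₁ : 0 < c₁) (hc₂ : 0 < c₂) (hc₃ : 0 < c₃)
    (hsort₁ : v₁ / c₁ ≤ v₂ / c₂) (hsort₂ : v₂ / c₂ ≤ v₃ / c₃)
    (hcase : c₂ / v₂ + c₃ / v₃ ≤ c₁ / v₁)
    (α : ℝ) (hα : 0 < α)
    (hαeq : max (0 : ℝ) (1 - c₁ / v₁ * α) + max (0 : ℝ) (1 - c₂ / v₂ * α) +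
      max (0 : ℝ) (1 - c₃ / v₃ * α) = 1) :
    α * max (0 : ℝ) (1 - c₁ / v₁ * α) = 0 ∧
    α * max (0 : ℝ) (1 - c₂ / v₂ * α) = (c₃ / v₃) / (c₂ / v₂ + c₃ / v₃) ^ 2 ∧
    α * max (0 : ℝ) (1 - c₃ / v₃ * α) = (c₂ / v₂) / (c₂ / v₂ + c₃ / v₃) ^ 2 ∧
    max (0 : ℝ) (v₁ - c₁ * α) = 0 ∧
    max (0 : ℝ) (v₂ - c₂ * α) = v₂ * (c₃ / v₃) / (c₂ / v₂ + c₃ / v₃) ∧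
    max (0 : ℝ) (v₃ - c₃ * α) = v₃ * (c₂ / v₂) / (c₂ / v₂ + c₃ / v₃) := by
  set a := c₁ / v₁ with ha
  set b := c₂ / v₂ with hb
  set c := c₃ / v₃ with hc
  have hbpos : 0 < b := div_pos hc₂ hv₂
  have hcpos : 0 < c := div_pos hc₃ hv₃
  have hS : 0 < b + c := by linarith
  have hapos : 0 < a := lt_of_lt_of_le hS hcase
  have hcb : c ≤ b := by
    rw [div_le_div_iff₀ hc₂ hc₃] at hsort₂
    rw [hc, hb, div_le_div_iff₀ hv₃ hv₂]
    nlinarith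
  have hba : b + c ≤ a := hcase
  set α₀ : ℝ := 1 / (b + c) with hα₀
  have hα₀pos : 0 < α₀ := by positivity
  have hbα₀ : b * α₀ + c * α₀ = 1 := by
    rw [hα₀]; field_simp
  have hbα₀lt : b * α₀ < 1 := by
    have := mul_pos hcpos hα₀pos; linarith
  have hcα₀le : c * α₀ ≤ b * α₀ :=
    mul_le_mul_of_nonneg_right hcb hα₀pos.le
  have haα₀ : 1 ≤ a * α₀ := by
    have := mul_le_mul_of_nonneg_right hba hα₀pos.le
    nlinarith
  -- α = α₀
  have hαval : α = α₀ := by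
    rcases lt_trichotomy α α₀ with h | h | h
    · exfalso
      have h2 : b * α < b * α₀ := mul_lt_mul_of_pos_left h hbpos
      have h3 : c * α < c * α₀ := mul_lt_mul_of_pos_left h hcpos
      have m1 := le_max_left (0 : ℝ) (1 - a * α)
      have m2 := le_max_right (0 : ℝ) (1 - b * α)
      have m3 := le_max_right (0 : ℝ) (1 - c * α)
      linarith
    · exact h
    · exfalso
      have h2 : b * α₀ < b * α := mul_lt_mul_of_pos_left h hbpos
      have h3 : c * α₀ < c * α := mul_lt_mul_of_pos_left h hcpos
      have ha2 : a * α₀ < a * α := mul_lt_mul_of_pos_left h hapos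
      have haα : 1 - a * α ≤ 0 := by linarith
      have hm1 : max (0 : ℝ) (1 - a * α) = 0 := max_eq_left haα
      have hm2 : max (0 : ℝ) (1 - b * α) < 1 - b * α₀ :=
        max_lt (by linarith) (by linarith)
      have hm3 : max (0 : ℝ) (1 - c * α) ≤ 1 - c * α₀ :=
        max_le (by linarith) (by linarith)
      linarith
  subst hαval
  have h1 : max (0 : ℝ) (1 - a * α₀) = 0 := max_eq_left (by linarith)
  have h2 : max (0 : ℝ) (1 - b * α₀) = c / (b + c) := by
    rw [max_eq_right (by linarith)]
    rw [hα₀]; field_simp; ring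
  have h3 : max (0 : ℝ) (1 - c * α₀) = b / (b + c) := by
    rw [max_eq_right (by linarith)]
    rw [hα₀]; field_simp; ring
  have hu1 : max (0 : ℝ) (v₁ - c₁ * α₀) = 0 := by
    apply max_eq_left
    have heq : v₁ - c₁ * α₀ = v₁ * (1 - a * α₀) := by
      rw [ha]; field_simp
    rw [heq]
    have : 1 - a * α₀ ≤ 0 := by linarith
    nlinarith
  have hu2 : max (0 : ℝ) (v₂ - c₂ * α₀) = v₂ * c / (b + c) := by
    have heq : v₂ - c₂ * α₀ = v₂ * (1 - b * α₀) := by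
      rw [hb]; field_simp
    have hnn : 0 ≤ v₂ - c₂ * α₀ := by
      rw [heq]; exact mul_nonneg hv₂.le (by linarith)
    rw [max_eq_right hnn, heq, hα₀]
    field_simp; ring
  have hu3 : max (0 : ℝ) (v₃ - c₃ * α₀) = v₃ * b / (b + c) := by
    have heq : v₃ - c₃ * α₀ = v₃ * (1 - c * α₀) := by
      rw [hc]; field_simp
    have hnn : 0 ≤ v₃ - c₃ * α₀ := by
      rw [heq]; exact mul_nonneg hv₃.le (by linarith)
    rw [max_eq_right hnn, heq, hα₀]
    field_simp; ring
  refine ⟨by rw [h1, mul_zero], ?_, ?_, hu1, hu2, hu3⟩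
  · rw [h2, hα₀, pow_two]
    rw [div_add_div _ _ (ne_of_gt hv₂) (ne_of_gt hv₃)] at hS ⊢
    field_simp
  · rw [h3, hα₀, pow_two]
    rw [div_add_div _ _ (ne_of_gt hv₂) (ne_of_gt hv₃)] at hS ⊢
    field_simp
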